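/- arXiv:0909.5075 — 6 statements merged into one kernel-verified Lean document; each statement's English description precedes it below -/
import Mathlib

section
/- Measurement entropy is subadditive: let 𝔄 and 𝔅 be test spaces and let ℭ be a test space on the outcome space X_𝔄 × X_𝔅 whose tests include all product tests E×F = {(e,f) : e∈E, f∈F} for E ∈ 𝔄, F ∈ 𝔅. Then for every non-signaling state ω on ℭ, H(ω) ≤ H(ω^A) + H(ω^B), where H(ω) is computed over the tests of ℭ and H(ω^A), H(ω^B) over 𝔄 and 𝔅 respectively. -/
/-- Local measurement entropy of a state `α` at a test `E` (base-2 logarithm). -/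
noncomputable def locEnt {X : Type*} (E : Finset X) (α : X → ℝ) : ℝ :=
  ∑ x ∈ E, -(α x * Real.logb 2 (α x))

/-- Measurement entropy: infimum of local entropies over all tests of the test space. -/
noncomputable def measEnt {X : Type*} (𝔄 : Set (Finset X)) (α : X → ℝ) : ℝ :=
  sInf ((fun E => locEnt E α) '' 𝔄)

/-- A state on a test space: nonnegative on outcomes, summing to 1 on every test. -/
def IsState {X : Type*} (𝔄 : Set (Finset X)) (α : X → ℝ) : Prop :=
  (∀ E ∈ 𝔄, ∀ x ∈ E, 0 ≤ α x) ∧ (∀ E ∈ 𝔄, ∑ x ∈ E, α x = 1)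

/-- A state on a product outcome space is non-signaling if each one-sided
marginal sum is independent of the test chosen on the other side. -/
def NonSignaling {X Y : Type*} (𝔄 : Set (Finset X)) (𝔅 : Set (Finset Y))
    (ω : X × Y → ℝ) : Prop :=
  (∀ e : X, ∀ F ∈ 𝔅, ∀ F' ∈ 𝔅, ∑ f ∈ F, ω (e, f) = ∑ f ∈ F', ω (e, f)) ∧
  (∀ f : Y, ∀ E ∈ 𝔄, ∀ E' ∈ 𝔄, ∑ e ∈ E, ω (e, f) = ∑ e ∈ E', ω (e, f))

/-- Gibbs-type inequality: joint Shannon entropy (natural log) on a product test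
is at most the sum of the marginal entropies. -/
lemma gibbs_aux {X Y : Type*} (E : Finset X) (F : Finset Y) (ω : X × Y → ℝ)
    (hnn : ∀ p ∈ E ×ˢ F, 0 ≤ ω p) (hsum : ∑ p ∈ E ×ˢ F, ω p = 1)
    (a : X → ℝ) (ha : ∀ e, a e = ∑ f ∈ F, ω (e, f))
    (b : Y → ℝ) (hb : ∀ f, b f = ∑ e ∈ E, ω (e, f)) :
    ∑ p ∈ E ×ˢ F, -(ω p * Real.log (ω p)) ≤
      (∑ e ∈ E, -(a e * Real.log (a e))) + ∑ f ∈ F, -(b f * Real.log (b f)) := by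
  have hnn' : ∀ e ∈ E, ∀ f ∈ F, 0 ≤ ω (e, f) := fun e he f hf =>
    hnn (e, f) (Finset.mem_product.2 ⟨he, hf⟩)
  have hwa : ∀ e ∈ E, ∀ f ∈ F, ω (e, f) ≤ a e := by
    intro e he f hf
    rw [ha]
    exact Finset.single_le_sum (fun i hi => hnn' e he i hi) hf
  have hwb : ∀ e ∈ E, ∀ f ∈ F, ω (e, f) ≤ b f := by
    intro e he f hf
    rw [hb]
    exact Finset.single_le_sum (fun i hi => hnn' i hi f hf) he
  have hA : ∀ e ∈ E, 0 ≤ a e := by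
    intro e he; rw [ha]; exact Finset.sum_nonneg (fun f hf => hnn' e he f hf)
  have hB : ∀ f ∈ F, 0 ≤ b f := by
    intro f hf; rw [hb]; exact Finset.sum_nonneg (fun e he => hnn' e he f hf)
  -- termwise bound
  have hstep : ∀ e ∈ E, ∀ f ∈ F,
      -(ω (e, f) * Real.log (ω (e, f))) ≤
        -(ω (e, f) * (Real.log (a e) + Real.log (b f))) + (a e * b f - ω (e, f)) := by
    intro e he f hf
    set w := ω (e, f) with hw
    rcases eq_or_lt_of_le (hnn' e he f hf) with h0 | h0
    · rw [hw, ← h0]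
      simp
      exact mul_nonneg (hA e he) (hB f hf)
    · have hae : 0 < a e := lt_of_lt_of_le h0 (hwa e he f hf)
      have hbf : 0 < b f := lt_of_lt_of_le h0 (hwb e he f hf)
      have hab : 0 < a e * b f / w := by positivity
      have := Real.log_le_sub_one_of_pos hab
      have hlog : Real.log (a e * b f / w) = Real.log (a e) + Real.log (b f) - Real.log w := by
        rw [Real.log_div (by positivity) (ne_of_gt h0), Real.log_mul (ne_of_gt hae) (ne_of_gt hbf)]
      rw [hlog] at this
      have := mul_le_mul_of_nonneg_left this (le_of_lt h0)
      have hdiv : w * (a e * b f / w - 1) = a e * b f - w := by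
        rw [mul_sub, mul_one, mul_div_assoc', mul_comm w, mul_div_assoc, div_self (show w ≠ 0 from ne_of_gt h0), mul_one]
      rw [hdiv] at this
      nlinarith [this]
  -- sum the termwise bound
  have hsum1 : ∑ p ∈ E ×ˢ F, -(ω p * Real.log (ω p)) ≤
      ∑ p ∈ E ×ˢ F, (-(ω p * (Real.log (a p.1) + Real.log (b p.2))) + (a p.1 * b p.2 - ω p)) := by
    apply Finset.sum_le_sum
    intro p hp
    rcases Finset.mem_product.1 hp with ⟨hp1, hp2⟩
    have := hstep p.1 hp1 p.2 hp2
    simpa using this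
  -- marginal sums equal 1
  have hsa : ∑ e ∈ E, a e = 1 := by
    rw [← hsum, Finset.sum_product]
    exact Finset.sum_congr rfl (fun e _ => ha e)
  have hsb : ∑ f ∈ F, b f = 1 := by
    rw [← hsum, Finset.sum_product_right]
    exact Finset.sum_congr rfl (fun f _ => hb f)
  -- split the RHS of the termwise sum
  have hsplit : ∑ p ∈ E ×ˢ F, (-(ω p * (Real.log (a p.1) + Real.log (b p.2))) + (a p.1 * b p.2 - ω p))
      = (∑ e ∈ E, -(a e * Real.log (a e))) + (∑ f ∈ F, -(b f * Real.log (b f)))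
        + ((∑ e ∈ E, a e) * (∑ f ∈ F, b f) - ∑ p ∈ E ×ˢ F, ω p) := by
    rw [Finset.sum_add_distrib, Finset.sum_sub_distrib]
    congr 1
    · have h1 : ∑ p ∈ E ×ˢ F, -(ω p * (Real.log (a p.1) + Real.log (b p.2)))
          = (∑ p ∈ E ×ˢ F, -(ω p * Real.log (a p.1)))
            + ∑ p ∈ E ×ˢ F, -(ω p * Real.log (b p.2)) := by
        rw [← Finset.sum_add_distrib]
        apply Finset.sum_congr rfl
        intro p _; ring
      rw [h1]
      congr 1
      · rw [Finset.sum_product]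
        apply Finset.sum_congr rfl
        intro e _
        show ∑ y ∈ F, -(ω (e, y) * Real.log (a e)) = -(a e * Real.log (a e))
        rw [Finset.sum_neg_distrib, ← Finset.sum_mul, ← ha e]
      · rw [Finset.sum_product_right]
        apply Finset.sum_congr rfl
        intro f _
        show ∑ x ∈ E, -(ω (x, f) * Real.log (b f)) = -(b f * Real.log (b f))
        rw [Finset.sum_neg_distrib, ← Finset.sum_mul, ← hb f]
    · rw [Finset.sum_mul_sum, Finset.sum_product]
  calc ∑ p ∈ E ×ˢ F, -(ω p * Real.log (ω p)) ≤ _ := hsum1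
    _ = _ := hsplit
    _ = (∑ e ∈ E, -(a e * Real.log (a e))) + ∑ f ∈ F, -(b f * Real.log (b f)) := by
        rw [hsa, hsb, hsum]; ring

lemma locEnt_eq_div {Z : Type*} (G : Finset Z) (α : Z → ℝ) :
    locEnt G α = (∑ x ∈ G, -(α x * Real.log (α x))) / Real.log 2 := by
  rw [locEnt, Finset.sum_div]
  apply Finset.sum_congr rfl
  intro x _
  rw [Real.logb, div_eq_mul_inv]
  ring

/-- Measurement entropy is subadditive: for a composite test space ℭ
containing all product tests, every non-signaling state ω satisfies
H(ω) ≤ H(ω^A) + H(ω^B). -/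
theorem measEnt_subadditive {X Y : Type*} (𝔄 : Set (Finset X)) (𝔅 : Set (Finset Y))
    (ℭ : Set (Finset (X × Y)))
    (h𝔄 : 𝔄.Nonempty) (h𝔅 : 𝔅.Nonempty)
    (h𝔄ne : ∀ E ∈ 𝔄, E.Nonempty) (h𝔅ne : ∀ F ∈ 𝔅, F.Nonempty)
    (hprod : ∀ E ∈ 𝔄, ∀ F ∈ 𝔅, E ×ˢ F ∈ ℭ)
    (ω : X × Y → ℝ) (hω : IsState ℭ ω) (hns : NonSignaling 𝔄 𝔅 ω)
    (ωA : X → ℝ) (hωA : ∀ F ∈ 𝔅, ∀ e, ωA e = ∑ f ∈ F, ω (e, f))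
    (ωB : Y → ℝ) (hωB : ∀ E ∈ 𝔄, ∀ f, ωB f = ∑ e ∈ E, ω (e, f)) :
    measEnt ℭ ω ≤ measEnt 𝔄 ωA + measEnt 𝔅 ωB := by
  have hlog2 : (0:ℝ) < Real.log 2 := Real.log_pos (by norm_num)
  -- local entropies over tests of ℭ are nonnegative, hence the image is bounded below
  have hbdd : BddBelow ((fun G => locEnt G ω) '' ℭ) := by
    refine ⟨0, ?_⟩
    rintro _ ⟨G, hG, rfl⟩
    apply Finset.sum_nonneg
    intro x hx
    have h0 := hω.1 G hG x hx
    have h1 : ω x ≤ 1 := by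
      rw [← hω.2 G hG]
      exact Finset.single_le_sum (fun i hi => hω.1 G hG i hi) hx
    have hlb : Real.logb 2 (ω x) ≤ 0 := Real.logb_nonpos (by norm_num) h0 h1
    nlinarith
  -- subadditivity at the level of a single product test
  have locsub : ∀ E ∈ 𝔄, ∀ F ∈ 𝔅, locEnt (E ×ˢ F) ω ≤ locEnt E ωA + locEnt F ωB := by
    intro E hE F hF
    rw [locEnt_eq_div, locEnt_eq_div, locEnt_eq_div, ← add_div]
    apply div_le_div_of_nonneg_right ?_ hlog2.le
    exact gibbs_aux E F ω (hω.1 _ (hprod E hE F hF)) (hω.2 _ (hprod E hE F hF))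
      ωA (hωA F hF) ωB (hωB E hE)
  have key : ∀ E ∈ 𝔄, ∀ F ∈ 𝔅, measEnt ℭ ω ≤ locEnt E ωA + locEnt F ωB := by
    intro E hE F hF
    exact le_trans (csInf_le hbdd ⟨E ×ˢ F, hprod E hE F hF, rfl⟩) (locsub E hE F hF)
  have h2 : ∀ E ∈ 𝔄, measEnt ℭ ω - locEnt E ωA ≤ measEnt 𝔅 ωB := by
    intro E hE
    apply le_csInf (h𝔅.image _)
    rintro _ ⟨F, hF, rfl⟩
    linarith [key E hE F hF]
  have h3 : measEnt ℭ ω - measEnt 𝔅 ωB ≤ measEnt 𝔄 ωA := by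
    apply le_csInf (h𝔄.image _)
    rintro _ ⟨E, hE, rfl⟩
    linarith [h2 E hE]
  linarith
end

section
/- Joint measurement entropy with a classical system: let A be the classical system with single test E (states are all probability distributions on E), let 𝔅 be a test space, and let ω be a state on the Foulis–Randall product of {E} with 𝔅, with marginal ω^A(e) = Σ_{f∈F} ω(e,f) (independent of F ∈ 𝔅) and conditional states ω^{B|e}(f) = ω(e,f)/ω^A(e) for ω^A(e) > 0. Then H(ω) = H(ω^A) + Σ_{e∈E, ω^A(e)>0} ω^A(e) · H(ω^{B|e}), where H(ω^A) = −Σ_{e∈E} ω^A(e) log₂ ω^A(e). -/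
/-- The Foulis–Randall product of the classical test space `{E}` with a test space
`𝔅`: its tests are the two-stage tests `{(e,f) : e ∈ E, f ∈ F e}`, one for each
choice of a test `F e ∈ 𝔅` for every `e`. -/
def frProd {Xa Y : Type*} [DecidableEq Xa] [DecidableEq Y]
    (E : Finset Xa) (𝔅 : Set (Finset Y)) : Set (Finset (Xa × Y)) :=
  {T | ∃ F : Xa → Finset Y, (∀ e ∈ E, F e ∈ 𝔅) ∧
    T = E.biUnion fun e => (F e).image fun f => (e, f)}

/-- Pointwise chain-rule identity for the `-x logb 2 x` function. -/
lemma ent_mul_aux (a b : ℝ) (ha : 0 < a) :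
    -((a * b) * Real.logb 2 (a * b)) =
      -(b * (a * Real.logb 2 a)) + a * -(b * Real.logb 2 b) := by
  rcases eq_or_ne b 0 with hb | hb
  · simp [hb]
  · rw [Real.logb_mul ha.ne' hb]
    ring

/-- joint measurement entropy with a classical system:
H(ω) = H(ω^A) + Σ_e ω^A(e) H(ω^{B|e}). -/
theorem classical_joint_measEnt {Xa Y : Type*} [DecidableEq Xa] [DecidableEq Y]
    (E : Finset Xa) (𝔅 : Set (Finset Y)) (h𝔅 : 𝔅.Nonempty)
    (ω : Xa × Y → ℝ) (hω : IsState (frProd E 𝔅) ω)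
    (ωA : Xa → ℝ) (hωA : ∀ F ∈ 𝔅, ∀ e, ωA e = ∑ f ∈ F, ω (e, f))
    (ωB : Xa → Y → ℝ) (hωB : ∀ e, 0 < ωA e → ∀ f, ωB e f = ω (e, f) / ωA e) :
    measEnt (frProd E 𝔅) ω =
      locEnt E ωA + ∑ e ∈ E, ωA e * measEnt 𝔅 (ωB e) := by
  classical
  obtain ⟨F₀, hF₀⟩ := h𝔅
  set mk : (Xa → Finset Y) → Finset (Xa × Y) :=
    fun F => E.biUnion fun e => (F e).image fun f => (e, f) with hmk
  have hmem : ∀ F : Xa → Finset Y, (∀ e ∈ E, F e ∈ 𝔅) → mk F ∈ frProd E 𝔅 :=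
    fun F hF => ⟨F, hF, rfl⟩
  -- sums over a product test decompose
  have hsum : ∀ (F : Xa → Finset Y) (g : Xa × Y → ℝ),
      ∑ p ∈ mk F, g p = ∑ e ∈ E, ∑ f ∈ F e, g (e, f) := by
    intro F g
    rw [hmk, Finset.sum_biUnion]
    · exact Finset.sum_congr rfl fun e _ =>
        Finset.sum_image (by intro x _ y _ h; exact (Prod.mk.inj h).2)
    · intro a _ b _ hab
      simp only [Finset.disjoint_left, Finset.mem_image]
      rintro p ⟨x, _, rfl⟩ ⟨y, _, h⟩
      exact hab ((Prod.mk.inj h).1).symm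
  -- nonnegativity of ω on outcomes
  have hnn : ∀ e ∈ E, ∀ F ∈ 𝔅, ∀ f ∈ F, 0 ≤ ω (e, f) := by
    intro e he F hF f hf
    refine hω.1 (mk fun _ => F) (hmem _ fun _ _ => hF) (e, f) ?_
    exact Finset.mem_biUnion.2 ⟨e, he, Finset.mem_image.2 ⟨f, hf, rfl⟩⟩
  have hA0 : ∀ e ∈ E, 0 ≤ ωA e := by
    intro e he
    rw [hωA F₀ hF₀ e]
    exact Finset.sum_nonneg fun f hf => hnn e he F₀ hF₀ f hf
  -- marginal sums to 1
  have hA1 : ∑ e ∈ E, ωA e = 1 := by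
    have := hω.2 (mk fun _ => F₀) (hmem _ fun _ _ => hF₀)
    rw [hsum] at this
    rw [← this]
    exact Finset.sum_congr rfl fun e _ => hωA F₀ hF₀ e
  -- conditional states are genuine states
  have hBsum : ∀ e, 0 < ωA e → ∀ F ∈ 𝔅, ∑ f ∈ F, ωB e f = 1 := by
    intro e hpos F hF
    rw [Finset.sum_congr rfl fun f _ => hωB e hpos f, ← Finset.sum_div,
      ← hωA F hF e, div_self hpos.ne']
  have hBmem : ∀ e ∈ E, 0 < ωA e → ∀ F ∈ 𝔅, ∀ f ∈ F, 0 ≤ ωB e f ∧ ωB e f ≤ 1 := by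
    intro e he hpos F hF f hf
    rw [hωB e hpos f]
    constructor
    · exact div_nonneg (hnn e he F hF f hf) hpos.le
    · rw [div_le_one hpos, hωA F hF e]
      exact Finset.single_le_sum (fun g hg => hnn e he F hF g hg) hf
  -- local entropies of conditional states are nonnegative
  have hent_nn : ∀ e ∈ E, 0 < ωA e → ∀ F ∈ 𝔅, 0 ≤ locEnt F (ωB e) := by
    intro e he hpos F hF
    refine Finset.sum_nonneg fun f hf => ?_
    obtain ⟨h0, h1⟩ := hBmem e he hpos F hF f hf
    have := Real.logb_nonpos (b := 2) one_lt_two h0 h1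
    nlinarith
  have hbddB : ∀ e ∈ E, 0 < ωA e → BddBelow ((fun F => locEnt F (ωB e)) '' 𝔅) := by
    intro e he hpos
    exact ⟨0, by rintro s ⟨F, hF, rfl⟩; exact hent_nn e he hpos F hF⟩
  -- key decomposition of local entropy of a product test
  have hdec : ∀ F : Xa → Finset Y, (∀ e ∈ E, F e ∈ 𝔅) →
      locEnt (mk F) ω = locEnt E ωA + ∑ e ∈ E, ωA e * locEnt (F e) (ωB e) := by
    intro F hF
    have h1 : locEnt (mk F) ω = ∑ e ∈ E, ∑ f ∈ F e, -(ω (e, f) * Real.logb 2 (ω (e, f))) :=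
      hsum F _
    have h2 : ∀ e ∈ E, ∑ f ∈ F e, -(ω (e, f) * Real.logb 2 (ω (e, f))) =
        -(ωA e * Real.logb 2 (ωA e)) + ωA e * locEnt (F e) (ωB e) := by
      intro e he
      rcases (hA0 e he).lt_or_eq with hpos | hzero
      · have hωprod : ∀ f ∈ F e, ω (e, f) = ωA e * ωB e f := by
          intro f hf
          rw [hωB e hpos f, mul_div_cancel₀ _ hpos.ne']
        calc ∑ f ∈ F e, -(ω (e, f) * Real.logb 2 (ω (e, f)))
            = ∑ f ∈ F e, (-(ωB e f * (ωA e * Real.logb 2 (ωA e)))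
                + ωA e * -(ωB e f * Real.logb 2 (ωB e f))) := by
              refine Finset.sum_congr rfl fun f hf => ?_
              rw [hωprod f hf]
              exact ent_mul_aux _ _ hpos
          _ = -(ωA e * Real.logb 2 (ωA e)) + ωA e * locEnt (F e) (ωB e) := by
              rw [Finset.sum_add_distrib, ← Finset.mul_sum, locEnt,
                Finset.sum_neg_distrib, ← Finset.sum_mul,
                hBsum e hpos (F e) (hF e he), one_mul]
      · have hz : ∀ f ∈ F e, ω (e, f) = 0 := by
          have := (hωA (F e) (hF e he) e).symm.trans hzero.symm
          exact fun f hf =>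
            (Finset.sum_eq_zero_iff_of_nonneg fun g hg =>
              hnn e he (F e) (hF e he) g hg).1 this f hf
        have hzz : ∑ f ∈ F e, -(ω (e, f) * Real.logb 2 (ω (e, f))) = 0 :=
          Finset.sum_eq_zero fun f hf => by rw [hz f hf]; simp
        rw [hzz, ← hzero]
        simp
    rw [h1, Finset.sum_congr rfl h2, Finset.sum_add_distrib, locEnt]
  -- the set of local entropies of ω
  set S : Set ℝ := (fun T => locEnt T ω) '' frProd E 𝔅 with hS
  set t : ℝ := locEnt E ωA + ∑ e ∈ E, ωA e * measEnt 𝔅 (ωB e) with ht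
  have hSne : S.Nonempty := ⟨_, ⟨mk fun _ => F₀, hmem (fun _ => F₀) (fun _ _ => hF₀), rfl⟩⟩
  have hlb : ∀ s ∈ S, t ≤ s := by
    rintro s ⟨T, ⟨F, hF, rfl⟩, rfl⟩
    have : (fun T => locEnt T ω) (mk F) =
        locEnt E ωA + ∑ e ∈ E, ωA e * locEnt (F e) (ωB e) := hdec F hF
    rw [this, ht]
    refine add_le_add le_rfl (Finset.sum_le_sum fun e he => ?_)
    rcases (hA0 e he).lt_or_eq with hpos | hzero
    · refine mul_le_mul_of_nonneg_left ?_ hpos.le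
      exact csInf_le (hbddB e he hpos) ⟨F e, hF e he, rfl⟩
    · rw [← hzero]; simp
  have hge : t ≤ measEnt (frProd E 𝔅) ω := le_csInf hSne hlb
  have hle : measEnt (frProd E 𝔅) ω ≤ t := by
    refine le_of_forall_pos_le_add fun ε hε => ?_
    have hchoice : ∀ e, e ∈ E → 0 < ωA e →
        ∃ Fe, Fe ∈ 𝔅 ∧ locEnt Fe (ωB e) < measEnt 𝔅 (ωB e) + ε := by
      intro e he hpos
      have hne : ((fun F => locEnt F (ωB e)) '' 𝔅).Nonempty := ⟨_, F₀, hF₀, rfl⟩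
      obtain ⟨s, ⟨Fe, hFe, rfl⟩, hs⟩ :=
        exists_lt_of_csInf_lt hne (lt_add_of_pos_right (measEnt 𝔅 (ωB e)) hε)
      exact ⟨Fe, hFe, hs⟩
    choose! F hF1 hF2 using hchoice
    set F' : Xa → Finset Y := fun e => if 0 < ωA e then F e else F₀ with hF'
    have hF'mem : ∀ e ∈ E, F' e ∈ 𝔅 := by
      intro e he
      by_cases hpos : 0 < ωA e
      · simpa [hF', hpos] using hF1 e he hpos
      · simp [hF', hpos, hF₀]
    have hkey : locEnt (mk F') ω ≤ t + ε := by
      rw [hdec F' hF'mem, ht]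
      have : ∑ e ∈ E, ωA e * locEnt (F' e) (ωB e) ≤
          ∑ e ∈ E, ωA e * (measEnt 𝔅 (ωB e) + ε) := by
        refine Finset.sum_le_sum fun e he => ?_
        rcases (hA0 e he).lt_or_eq with hpos | hzero
        · refine mul_le_mul_of_nonneg_left ?_ hpos.le
          have : F' e = F e := by simp [hF', hpos]
          rw [this]
          exact (hF2 e he hpos).le
        · rw [← hzero]; simp
      have h2 : ∑ e ∈ E, ωA e * (measEnt 𝔅 (ωB e) + ε) =
          ∑ e ∈ E, ωA e * measEnt 𝔅 (ωB e) + ε := by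
        rw [Finset.sum_congr rfl fun e _ => mul_add (ωA e) _ ε,
          Finset.sum_add_distrib, ← Finset.sum_mul, hA1, one_mul]
      linarith
    calc measEnt (frProd E 𝔅) ω ≤ locEnt (mk F') ω :=
          csInf_le ⟨t, hlb⟩ ⟨mk F', hmem F' hF'mem, rfl⟩
      _ ≤ t + ε := hkey
  exact le_antisymm hle hge
end

section
/- If A is classical then H(B|A) ≥ 0: let A be the classical system with single test E, let 𝔅 be a test space, and let ω be a state on the Foulis–Randall product of {E} with 𝔅, with marginal ω^A(e) = Σ_{f∈F} ω(e,f). Then H(ω) ≥ H(ω^A), i.e., the conditional entropy H(B|A) := H(ω) − H(ω^A) is nonnegative. -/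
theorem key_le {Xa Y : Type*} [DecidableEq Xa] [DecidableEq Y]
    (E : Finset Xa) (𝔅 : Set (Finset Y))
    (ω : Xa × Y → ℝ) (hω : IsState (frProd E 𝔅) ω)
    (ωA : Xa → ℝ) (hωA : ∀ F ∈ 𝔅, ∀ e, ωA e = ∑ f ∈ F, ω (e, f))
    (T : Finset (Xa × Y)) (hT : T ∈ frProd E 𝔅) :
    locEnt E ωA ≤ locEnt T ω := by
  obtain ⟨F, hF, rfl⟩ := hT
  have hdisj : (E : Set Xa).PairwiseDisjoint
      (fun e => (F e).image fun f => (e, f)) := by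
    intro a _ b _ hab
    simp only [Finset.disjoint_left, Finset.mem_image]
    rintro ⟨x, y⟩ ⟨f, _, hf⟩ ⟨g, _, hg⟩
    exact hab (Prod.ext_iff.1 (hf.trans hg.symm)).1
  have hnn : ∀ e ∈ E, ∀ f ∈ F e, 0 ≤ ω (e, f) := by
    intro e he f hf
    exact hω.1 _ ⟨F, hF, rfl⟩ (e, f)
      (Finset.mem_biUnion.2 ⟨e, he, Finset.mem_image.2 ⟨f, hf, rfl⟩⟩)
  rw [locEnt, locEnt, Finset.sum_biUnion hdisj]
  apply Finset.sum_le_sum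
  intro e he
  rw [Finset.sum_image (by intro a _ b _ h; exact (Prod.ext_iff.1 h).2)]
  have ha : ωA e = ∑ f ∈ F e, ω (e, f) := hωA (F e) (hF e he) e
  calc -(ωA e * Real.logb 2 (ωA e))
      = ∑ f ∈ F e, -(ω (e, f) * Real.logb 2 (ωA e)) := by
        rw [ha, Finset.sum_mul]; simp
    _ ≤ ∑ f ∈ F e, -(ω (e, f) * Real.logb 2 (ω (e, f))) := by
        apply Finset.sum_le_sum
        intro f hf
        rw [neg_le_neg_iff]
        rcases eq_or_lt_of_le (hnn e he f hf) with h0 | h0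
        · rw [← h0]; simp
        · apply mul_le_mul_of_nonneg_left _ (le_of_lt h0)
          apply Real.logb_le_logb_of_le one_lt_two h0
          rw [ha]
          exact Finset.single_le_sum (fun g hg => hnn e he g hg) hf
  
/-- if `A` is classical then `H(B|A) ≥ 0`, i.e. the joint
measurement entropy dominates the Shannon entropy of the classical marginal. -/
theorem condEnt_nonneg_of_classical {Xa Y : Type*} [DecidableEq Xa] [DecidableEq Y]
    (E : Finset Xa) (𝔅 : Set (Finset Y)) (h𝔅 : 𝔅.Nonempty)
    (ω : Xa × Y → ℝ) (hω : IsState (frProd E 𝔅) ω)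
    (ωA : Xa → ℝ) (hωA : ∀ F ∈ 𝔅, ∀ e, ωA e = ∑ f ∈ F, ω (e, f)) :
    locEnt E ωA ≤ measEnt (frProd E 𝔅) ω := by
  obtain ⟨F0, hF0⟩ := h𝔅
  apply le_csInf
  · exact ⟨locEnt (E.biUnion fun e => F0.image fun f => (e, f)) ω,
      ⟨_, ⟨fun _ => F0, fun _ _ => hF0, rfl⟩, rfl⟩⟩
  · rintro b ⟨T, hT, rfl⟩
    exact key_le E 𝔅 ω hω ωA hωA T hT
end

section
/- Additivity for independent systems with a classical factor: let A be the classical system with single test E, let 𝔅 be a test space, let α be a probability distribution on E and β a state on 𝔅, and let ω be the product state on the Foulis–Randall product of {E} with 𝔅 defined by ω(e,f) = α(e)·β(f). Then H(ω) = H(α) + H(β), where H(α) is the Shannon entropy of α and H(β), H(ω) are measurement entropies. -/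
lemma pt_entropy (a b : ℝ) (ha : 0 ≤ a) (hb : 0 ≤ b) :
    -(a * b * Real.logb 2 (a * b)) =
      b * -(a * Real.logb 2 a) + a * -(b * Real.logb 2 b) := by
  rcases eq_or_lt_of_le ha with h | h
  · simp [← h]
  rcases eq_or_lt_of_le hb with h' | h'
  · simp [← h']
  rw [Real.logb, Real.logb, Real.logb, Real.log_mul h.ne' h'.ne']
  ring

lemma locEnt_nonneg {Y : Type*} (F : Finset Y) (β : Y → ℝ)
    (h0 : ∀ f ∈ F, 0 ≤ β f) (h1 : ∑ f ∈ F, β f = 1) : 0 ≤ locEnt F β := by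
  apply Finset.sum_nonneg
  intro f hf
  have hle : β f ≤ 1 := by
    rw [← h1]; exact Finset.single_le_sum h0 hf
  have : Real.logb 2 (β f) ≤ 0 := Real.logb_nonpos one_lt_two (h0 f hf) hle
  nlinarith [h0 f hf]

lemma locEnt_prod {Xa Y : Type*} [DecidableEq Xa] [DecidableEq Y]
    (E : Finset Xa) (F : Xa → Finset Y) (α : Xa → ℝ) (β : Y → ℝ)
    (hα : ∀ e ∈ E, 0 ≤ α e)
    (hβ0 : ∀ e ∈ E, ∀ f ∈ F e, 0 ≤ β f)
    (hβ1 : ∀ e ∈ E, ∑ f ∈ F e, β f = 1) :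
    locEnt (E.biUnion fun e => (F e).image fun f => (e, f))
        (fun p => α p.1 * β p.2)
      = locEnt E α + ∑ e ∈ E, α e * locEnt (F e) β := by
  unfold locEnt
  rw [Finset.sum_biUnion]
  · have : ∀ e ∈ E,
        ∑ p ∈ (F e).image (fun f => (e, f)),
            -(α p.1 * β p.2 * Real.logb 2 (α p.1 * β p.2))
          = -(α e * Real.logb 2 (α e)) + α e * ∑ f ∈ F e, -(β f * Real.logb 2 (β f)) := by
      intro e he
      rw [Finset.sum_image (fun x _ y _ h => (Prod.ext_iff.mp h).2)]
      have : ∀ f ∈ F e,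
          -(α e * β f * Real.logb 2 (α e * β f))
            = β f * -(α e * Real.logb 2 (α e)) + α e * -(β f * Real.logb 2 (β f)) :=
        fun f hf => pt_entropy _ _ (hα e he) (hβ0 e he f hf)
      rw [Finset.sum_congr rfl this, Finset.sum_add_distrib, ← Finset.sum_mul,
        hβ1 e he, one_mul, ← Finset.mul_sum]
    rw [Finset.sum_congr rfl this, Finset.sum_add_distrib]
  · intro e he e' he' hne
    simp only [Finset.disjoint_left, Finset.mem_image]
    rintro p ⟨f, hf, rfl⟩ ⟨f', hf', h⟩
    exact hne ((congrArg Prod.fst h).symm)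

/-- additivity of measurement entropy for an independent product of
a classical system with a general system: H(α ⊗ β) = H(α) + H(β). -/
theorem measEnt_additive_of_independent_classical {Xa Y : Type*}
    [DecidableEq Xa] [DecidableEq Y]
    (E : Finset Xa) (𝔅 : Set (Finset Y)) (h𝔅 : 𝔅.Nonempty)
    (α : Xa → ℝ) (hα : ∀ e ∈ E, 0 ≤ α e) (hαsum : ∑ e ∈ E, α e = 1)
    (β : Y → ℝ) (hβ : IsState 𝔅 β) :
    measEnt (frProd E 𝔅) (fun p => α p.1 * β p.2) =
      locEnt E α + measEnt 𝔅 β := by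
  obtain ⟨hβ0, hβ1⟩ := hβ
  set S := (fun F => locEnt F β) '' 𝔅 with hS
  have hSne : S.Nonempty := h𝔅.image _
  have hSbdd : BddBelow S := by
    refine ⟨0, ?_⟩
    rintro x ⟨F, hF, rfl⟩
    exact locEnt_nonneg F β (hβ0 F hF) (hβ1 F hF)
  have hc : ∀ F ∈ 𝔅, measEnt 𝔅 β ≤ locEnt F β := fun F hF =>
    csInf_le hSbdd ⟨F, hF, rfl⟩
  -- key value formula
  have key : ∀ F : Xa → Finset Y, (∀ e ∈ E, F e ∈ 𝔅) →
      locEnt (E.biUnion fun e => (F e).image fun f => (e, f))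
          (fun p => α p.1 * β p.2)
        = locEnt E α + ∑ e ∈ E, α e * locEnt (F e) β := by
    intro F hF
    exact locEnt_prod E F α β hα (fun e he => hβ0 _ (hF e he))
      (fun e he => hβ1 _ (hF e he))
  set T := (fun T => locEnt T (fun p : Xa × Y => α p.1 * β p.2)) '' frProd E 𝔅 with hT
  have hTne : T.Nonempty := by
    obtain ⟨F₀, hF₀⟩ := h𝔅
    exact ⟨_, ⟨_, ⟨fun _ => F₀, fun _ _ => hF₀, rfl⟩, rfl⟩⟩
  have hlb : ∀ x ∈ T, locEnt E α + measEnt 𝔅 β ≤ x := by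
    rintro x ⟨Tt, ⟨F, hF, rfl⟩, rfl⟩
    dsimp only
    rw [key F hF]
    have h1 : measEnt 𝔅 β = ∑ e ∈ E, α e * measEnt 𝔅 β := by
      rw [← Finset.sum_mul, hαsum, one_mul]
    nth_rewrite 1 [h1]
    exact add_le_add_right (Finset.sum_le_sum fun e he =>
        mul_le_mul_of_nonneg_left (hc _ (hF e he)) (hα e he)) _
  have hub : ∀ ε > 0, measEnt (frProd E 𝔅) (fun p => α p.1 * β p.2)
      ≤ locEnt E α + measEnt 𝔅 β + ε := by
    intro ε hε
    obtain ⟨x, ⟨F₀, hF₀, rfl⟩, hx⟩ := Real.lt_sInf_add_pos hSne hε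
    have hmem : (E.biUnion fun e => (F₀).image fun f => (e, f)) ∈ frProd E 𝔅 :=
      ⟨fun _ => F₀, fun _ _ => hF₀, rfl⟩
    refine le_trans (csInf_le ?_ ⟨_, hmem, rfl⟩) ?_
    · refine ⟨locEnt E α + measEnt 𝔅 β, ?_⟩
      exact hlb
    · dsimp only
      rw [key (fun _ => F₀) (fun _ _ => hF₀)]
      have : ∑ e ∈ E, α e * locEnt F₀ β = locEnt F₀ β := by
        rw [← Finset.sum_mul, hαsum, one_mul]
      rw [this, add_assoc]
      gcongr
      exact le_of_lt hx
  refine le_antisymm ?_ (le_csInf hTne hlb)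
  exact le_of_forall_pos_le_add hub
end

section
/- Failure of strong subadditivity of measurement entropy: let A and B be classical bits (single tests {0,1}) and let C be a squit, the test space {{e,e'},{f,f'}} with all states allowed. Consider the state ω on the tripartite composite (tests: measure both bits and then a squit test possibly depending on the two bit values) given by: ω(a,b,·) assigns, for (a,b) = (0,0): probability 1/4 to e and 1/4 to f; for (0,1): 1/4 to e and 1/4 to f'; for (1,0): 1/4 to e' and 1/4 to f; for (1,1): 1/4 to e' and 1/4 to f' (so the outcome of {e,e'} is perfectly correlated with A and the outcome of {f,f'} with B). Then H(ω^C) = H(ω^{AC}) = H(ω^{BC}) = 1, H(ω) = 2, and hence I(A:B|C) := H(ω^{AC}) + H(ω^{BC}) − H(ω^C) − H(ω) = −1 < 0. -/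
/-- The squit test space `{{e,e'},{f,f'}}`, with outcomes `e = 0`, `e' = 1`,
`f = 2`, `f' = 3`. -/
def squit : Set (Finset (Fin 4)) := {({0, 1} : Finset (Fin 4)), ({2, 3} : Finset (Fin 4))}

/-- Composite of two classical bits `A`, `B` with a squit `C`: tests measure both
bits and then perform a squit test chosen as a function of the two bit values. -/
def testsABC : Set (Finset (Fin 2 × Fin 2 × Fin 4)) :=
  {T | ∃ F : Fin 2 → Fin 2 → Finset (Fin 4), (∀ a b, F a b ∈ squit) ∧
    T = Finset.univ.biUnion fun a => Finset.univ.biUnion fun b =>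
      (F a b).image fun c => (a, b, c)}

/-- Composite of the classical bit `A` with the squit `C`. -/
def testsAC : Set (Finset (Fin 2 × Fin 4)) :=
  {T | ∃ F : Fin 2 → Finset (Fin 4), (∀ a, F a ∈ squit) ∧
    T = Finset.univ.biUnion fun a => (F a).image fun c => (a, c)}

/-- The tripartite state: the outcome of `{e,e'}` is perfectly correlated with the
bit `A` and the outcome of `{f,f'}` is perfectly correlated with the bit `B`. -/
noncomputable def ωABC : Fin 2 × Fin 2 × Fin 4 → ℝ := fun x =>
  if (x.2.2 = 0 ∧ x.1 = 0) ∨ (x.2.2 = 1 ∧ x.1 = 1) ∨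
     (x.2.2 = 2 ∧ x.2.1 = 0) ∨ (x.2.2 = 3 ∧ x.2.1 = 1)
  then 1 / 4 else 0

/-- Marginal on the squit `C`. -/
noncomputable def ωC : Fin 4 → ℝ := fun c => ∑ a : Fin 2, ∑ b : Fin 2, ωABC (a, b, c)

/-- Marginal on `AC`. -/
noncomputable def ωAC : Fin 2 × Fin 4 → ℝ := fun x => ∑ b : Fin 2, ωABC (x.1, b, x.2)

/-- Marginal on `BC`. -/
noncomputable def ωBC : Fin 2 × Fin 4 → ℝ := fun x => ∑ a : Fin 2, ωABC (a, x.1, x.2)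

lemma logb_half : Real.logb 2 (1/2 : ℝ) = -1 := by
  rw [show (1/2:ℝ) = 2⁻¹ by norm_num, Real.logb_inv, Real.logb_self_eq_one] <;> norm_num

lemma logb_quarter : Real.logb 2 (1/4 : ℝ) = -2 := by
  rw [show (1/4:ℝ) = ((2:ℝ)^(2:ℕ))⁻¹ by norm_num, Real.logb_inv, Real.logb_pow,
    Real.logb_self_eq_one] <;> norm_num

lemma locEnt_AC (F : Fin 2 → Finset (Fin 4)) (α : Fin 2 × Fin 4 → ℝ) :
    locEnt (Finset.univ.biUnion fun a => (F a).image fun c => (a, c)) α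
      = ∑ a : Fin 2, ∑ c ∈ F a, -(α (a, c) * Real.logb 2 (α (a, c))) := by
  rw [locEnt, Finset.sum_biUnion]
  · refine Finset.sum_congr rfl fun a _ => ?_
    rw [Finset.sum_image]
    intro x _ y _ h
    simpa using h
  · intro a _ b _ hab
    simp only [Finset.disjoint_left, Finset.mem_image]
    rintro p ⟨x, _, rfl⟩ ⟨y, _, h⟩
    exact hab (congrArg Prod.fst h).symm

lemma locEnt_ABC (F : Fin 2 → Fin 2 → Finset (Fin 4)) (α : Fin 2 × Fin 2 × Fin 4 → ℝ) :
    locEnt (Finset.univ.biUnion fun a => Finset.univ.biUnion fun b =>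
        (F a b).image fun c => (a, b, c)) α
      = ∑ a : Fin 2, ∑ b : Fin 2, ∑ c ∈ F a b,
          -(α (a, b, c) * Real.logb 2 (α (a, b, c))) := by
  rw [locEnt, Finset.sum_biUnion]
  · refine Finset.sum_congr rfl fun a _ => ?_
    rw [Finset.sum_biUnion]
    · refine Finset.sum_congr rfl fun b _ => ?_
      rw [Finset.sum_image]
      intro x _ y _ h
      simpa using h
    · intro b _ b' _ hbb
      simp only [Finset.disjoint_left, Finset.mem_image]
      rintro p ⟨x, _, rfl⟩ ⟨y, _, h⟩
      exact hbb (congrArg (fun q : Fin 2 × Fin 2 × Fin 4 => q.2.1) h).symm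
  · intro a _ a' _ haa
    simp only [Finset.disjoint_left, Finset.mem_biUnion, Finset.mem_image]
    rintro p ⟨b, _, x, _, rfl⟩ ⟨b', _, y, _, h⟩
    exact haa (congrArg Prod.fst h).symm

lemma mem_squit {E : Finset (Fin 4)} (h : E ∈ squit) :
    E = ({0, 1} : Finset (Fin 4)) ∨ E = ({2, 3} : Finset (Fin 4)) := h

lemma ωC_val : ∀ c, ωC c = 1/2 := by
  intro c
  fin_cases c <;>
    (simp only [ωC, ωABC, Fin.sum_univ_two];
     norm_num [Fin.ext_iff, show ((3:Fin 4):ℕ) = 3 from rfl])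

lemma ωAC_val : ωAC (0,0) = 1/2 ∧ ωAC (0,1) = 0 ∧ ωAC (0,2) = 1/4 ∧ ωAC (0,3) = 1/4 ∧
    ωAC (1,0) = 0 ∧ ωAC (1,1) = 1/2 ∧ ωAC (1,2) = 1/4 ∧ ωAC (1,3) = 1/4 := by
  refine ⟨?_, ?_, ?_, ?_, ?_, ?_, ?_, ?_⟩ <;>
    (simp only [ωAC, ωABC, Fin.sum_univ_two];
     norm_num [Fin.ext_iff, show ((3:Fin 4):ℕ) = 3 from rfl])

lemma ωBC_val : ωBC (0,0) = 1/4 ∧ ωBC (0,1) = 1/4 ∧ ωBC (0,2) = 1/2 ∧ ωBC (0,3) = 0 ∧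
    ωBC (1,0) = 1/4 ∧ ωBC (1,1) = 1/4 ∧ ωBC (1,2) = 0 ∧ ωBC (1,3) = 1/2 := by
  refine ⟨?_, ?_, ?_, ?_, ?_, ?_, ?_, ?_⟩ <;>
    (simp only [ωBC, ωABC, Fin.sum_univ_two];
     norm_num [Fin.ext_iff, show ((3:Fin 4):ℕ) = 3 from rfl])

lemma ωABC_val : ∀ x, ωABC x = 1/4 ∨ ωABC x = 0 := by
  intro x
  by_cases h : (x.2.2 = 0 ∧ x.1 = 0) ∨ (x.2.2 = 1 ∧ x.1 = 1) ∨
     (x.2.2 = 2 ∧ x.2.1 = 0) ∨ (x.2.2 = 3 ∧ x.2.1 = 1)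
  · exact Or.inl (by simp [ωABC, h])
  · exact Or.inr (by simp [ωABC, h])

lemma hC : measEnt squit ωC = 1 := by
  have hval : ∀ E ∈ squit, locEnt E ωC = 1 := by
    intro E hE
    rcases mem_squit hE with rfl | rfl <;>
      · rw [locEnt, Finset.sum_pair (by decide)]
        rw [ωC_val, ωC_val, logb_half]; norm_num
  refine IsLeast.csInf_eq ⟨⟨{0,1}, Or.inl rfl, hval _ (Or.inl rfl)⟩, ?_⟩
  rintro y ⟨E, hE, rfl⟩
  exact (hval E hE).ge

lemma hAC : measEnt testsAC ωAC = 1 := by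
  obtain ⟨h00, h01, h02, h03, h10, h11, h12, h13⟩ := ωAC_val
  have hlow : ∀ T ∈ testsAC, 1 ≤ locEnt T ωAC := by
    rintro T ⟨F, hF, rfl⟩
    rw [locEnt_AC, Fin.sum_univ_two]
    rcases mem_squit (hF 0) with h0 | h0 <;> rcases mem_squit (hF 1) with h1 | h1 <;>
      rw [h0, h1] <;>
      simp only [Finset.sum_pair (show (0:Fin 4) ≠ 1 by decide),
        Finset.sum_pair (show (2:Fin 4) ≠ 3 by decide),
        h00, h01, h02, h03, h10, h11, h12, h13] <;>
      norm_num [logb_half, logb_quarter]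
  have hmem : (1:ℝ) ∈ (fun E => locEnt E ωAC) '' testsAC := by
    refine ⟨_, ⟨fun _ => {0,1}, fun _ => Or.inl rfl, rfl⟩, ?_⟩
    show locEnt _ ωAC = 1
    rw [locEnt_AC (fun _ => ({0,1} : Finset (Fin 4))), Fin.sum_univ_two]
    simp only [Finset.sum_pair (show (0:Fin 4) ≠ 1 by decide),
      h00, h01, h10, h11]
    norm_num [logb_half]
  refine IsLeast.csInf_eq ⟨hmem, ?_⟩
  rintro y ⟨E, hE, rfl⟩
  exact hlow E hE

lemma hBC : measEnt testsAC ωBC = 1 := by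
  obtain ⟨h00, h01, h02, h03, h10, h11, h12, h13⟩ := ωBC_val
  have hlow : ∀ T ∈ testsAC, 1 ≤ locEnt T ωBC := by
    rintro T ⟨F, hF, rfl⟩
    rw [locEnt_AC, Fin.sum_univ_two]
    rcases mem_squit (hF 0) with h0 | h0 <;> rcases mem_squit (hF 1) with h1 | h1 <;>
      rw [h0, h1] <;>
      simp only [Finset.sum_pair (show (0:Fin 4) ≠ 1 by decide),
        Finset.sum_pair (show (2:Fin 4) ≠ 3 by decide),
        h00, h01, h02, h03, h10, h11, h12, h13] <;>
      norm_num [logb_half, logb_quarter]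
  have hmem : (1:ℝ) ∈ (fun E => locEnt E ωBC) '' testsAC := by
    refine ⟨_, ⟨fun _ => {2,3}, fun _ => Or.inr rfl, rfl⟩, ?_⟩
    show locEnt _ ωBC = 1
    rw [locEnt_AC (fun _ => ({2,3} : Finset (Fin 4))), Fin.sum_univ_two]
    simp only [Finset.sum_pair (show (2:Fin 4) ≠ 3 by decide),
      h02, h03, h12, h13]
    norm_num [logb_half]
  refine IsLeast.csInf_eq ⟨hmem, ?_⟩
  rintro y ⟨E, hE, rfl⟩
  exact hlow E hE

lemma ωABC_vals :
    ωABC (0,0,0) = 1/4 ∧ ωABC (0,0,1) = 0 ∧ ωABC (0,0,2) = 1/4 ∧ ωABC (0,0,3) = 0 ∧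
    ωABC (0,1,0) = 1/4 ∧ ωABC (0,1,1) = 0 ∧ ωABC (0,1,2) = 0 ∧ ωABC (0,1,3) = 1/4 ∧
    ωABC (1,0,0) = 0 ∧ ωABC (1,0,1) = 1/4 ∧ ωABC (1,0,2) = 1/4 ∧ ωABC (1,0,3) = 0 ∧
    ωABC (1,1,0) = 0 ∧ ωABC (1,1,1) = 1/4 ∧ ωABC (1,1,2) = 0 ∧ ωABC (1,1,3) = 1/4 := by
  refine ⟨?_,?_,?_,?_,?_,?_,?_,?_,?_,?_,?_,?_,?_,?_,?_,?_⟩ <;>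
    (simp only [ωABC]; norm_num [Fin.ext_iff, show ((3:Fin 4):ℕ) = 3 from rfl])

lemma hABC : measEnt testsABC ωABC = 2 := by
  obtain ⟨v1,v2,v3,v4,v5,v6,v7,v8,v9,v10,v11,v12,v13,v14,v15,v16⟩ := ωABC_vals
  have hval : ∀ T ∈ testsABC, locEnt T ωABC = 2 := by
    rintro T ⟨F, hF, rfl⟩
    rw [locEnt_ABC, Fin.sum_univ_two]
    conv_lhs => rw [Fin.sum_univ_two, Fin.sum_univ_two]
    rcases mem_squit (hF 0 0) with h | h <;> rw [h] <;>
    rcases mem_squit (hF 0 1) with h' | h' <;> rw [h'] <;>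
    rcases mem_squit (hF 1 0) with h'' | h'' <;> rw [h''] <;>
    rcases mem_squit (hF 1 1) with h''' | h''' <;> rw [h'''] <;>
      simp only [Finset.sum_pair (show (0:Fin 4) ≠ 1 by decide),
        Finset.sum_pair (show (2:Fin 4) ≠ 3 by decide),
        v1,v2,v3,v4,v5,v6,v7,v8,v9,v10,v11,v12,v13,v14,v15,v16] <;>
      norm_num [logb_quarter]
  refine IsLeast.csInf_eq ⟨⟨_, ⟨fun _ _ => {0,1}, fun _ _ => Or.inl rfl, rfl⟩,
    hval _ ⟨fun _ _ => {0,1}, fun _ _ => Or.inl rfl, rfl⟩⟩, ?_⟩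
  rintro y ⟨E, hE, rfl⟩
  exact (hval E hE).ge

/-- failure of strong subadditivity of the measurement entropy:
H(C) = H(AC) = H(BC) = 1, H(ABC) = 2, hence I(A:B|C) = −1 < 0. -/
theorem failure_of_strong_subadditivity :
    measEnt squit ωC = 1 ∧
    measEnt testsAC ωAC = 1 ∧
    measEnt testsAC ωBC = 1 ∧
    measEnt testsABC ωABC = 2 ∧
    measEnt testsAC ωAC + measEnt testsAC ωBC - measEnt squit ωC -
        measEnt testsABC ωABC = -1 ∧
    (-1 : ℝ) < 0 := by
  refine ⟨hC, hAC, hBC, hABC, ?_, by norm_num⟩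
  rw [hC, hAC, hBC, hABC]; norm_num
end

section
/- Steering bounds measurement entropy by mixing entropy: let 𝔄 and 𝔅 be test spaces with state spaces Ω^A, Ω^B compact convex, let ℭ be a test space on X_𝔄 × X_𝔅 containing all product tests, and let ω be a non-signaling state on ℭ. Suppose ω steers its marginal ω^B: for every finite convex decomposition ω^B = Σ_{i=1}^n p_i β_i into pairwise distinct extreme points β_i of Ω^B, there exists a test E = {a_1, …, a_n} ∈ 𝔄 with ω^A(a_i) = p_i and ω^{B|a_i} = β_i for every i with p_i > 0. Then H(ω^A) ≤ S(ω^B), where H(ω^A) is the measurement entropy of the marginal on 𝔄 and S(ω^B) is the mixing entropy of the marginal in Ω^B. -/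
section AuxMinkowski
open Set Module Filter Topology

section Mink
variable {E : Type*} [NormedAddCommGroup E] [NormedSpace ℝ E]

/-- Transfer of extreme points through the injective affine map `k ↦ ↑k + y`. -/
lemma aux_ext_transfer (K : Submodule ℝ E) (y : E) (A : Set ↥K) :
    (fun k : ↥K => (k : E) + y) '' (A.extremePoints ℝ)
      ⊆ ((fun k : ↥K => (k : E) + y) '' A).extremePoints ℝ := by
  rintro _ ⟨w, hw, rfl⟩
  rw [mem_extremePoints] at hw ⊢
  refine ⟨mem_image_of_mem _ hw.1, ?_⟩
  rintro _ ⟨a, ha, rfl⟩ _ ⟨b, hb, rfl⟩ ⟨t, u, ht, hu, htu, heq⟩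
  have hab : t • a + u • b = w := by
    apply Subtype.ext
    push_cast
    have : t • ((a : E) + y) + u • ((b : E) + y) = t • (a : E) + u • (b : E) + (t + u) • y := by
      simp [add_smul, smul_add]; abel
    rw [this, htu, one_smul] at heq
    have := heq
    linear_combination (norm := module) this
  obtain ⟨h1, h2⟩ := hw.2 a ha b hb ⟨t, u, ht, hu, htu, hab⟩
  rw [h1, h2]; exact ⟨rfl, rfl⟩

/-- Descend a compact convex set lying in a coset of a submodule into the submodule. -/
lemma aux_descend [FiniteDimensional ℝ E] (K : Submodule ℝ E) (y : E) (F : Set E)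
    (hsub : ∀ u ∈ F, u - y ∈ K) (hcomp : IsCompact F) (hconv : Convex ℝ F)
    (hK : ∀ A : Set ↥K, IsCompact A → Convex ℝ A → A ⊆ convexHull ℝ (A.extremePoints ℝ)) :
    F ⊆ convexHull ℝ (F.extremePoints ℝ) := by
  set f : ↥K →ᵃ[ℝ] E :=
    (AffineEquiv.vaddConst ℝ y).toAffineMap.comp K.subtype.toAffineMap with hf
  have hfapp : ∀ k : ↥K, f k = (k : E) + y := by
    intro k; simp [hf, AffineEquiv.vaddConst]; rfl
  have hcont : Continuous fun k : ↥K => (k : E) + y :=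
    (continuous_subtype_val).add continuous_const
  set A : Set ↥K := (fun k : ↥K => (k : E) + y) ⁻¹' F with hA
  have himg : (fun k : ↥K => (k : E) + y) '' A = F := by
    apply Subset.antisymm (image_preimage_subset _ _)
    intro u hu
    exact ⟨⟨u - y, hsub u hu⟩, by simpa [hA] using hu, by simp⟩
  have hAcomp : IsCompact A := by
    apply Metric.isCompact_of_isClosed_isBounded (hcomp.isClosed.preimage hcont)
    obtain ⟨R, hR⟩ := hcomp.isBounded.exists_norm_le
    apply isBounded_iff_forall_norm_le.2 ⟨R + ‖y‖, ?_⟩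
    intro k hk
    have : ‖(k : E)‖ ≤ R + ‖y‖ := by
      have h1 := hR _ hk
      calc ‖(k : E)‖ = ‖((k : E) + y) - y‖ := by rw [add_sub_cancel_right]
        _ ≤ ‖(k : E) + y‖ + ‖y‖ := norm_sub_le _ _
        _ ≤ R + ‖y‖ := by linarith
    simpa using this
  have hAconv : Convex ℝ A := by
    have := hconv.affine_preimage f
    simpa [hA, funext hfapp] using this
  intro x hx
  obtain ⟨k, hk, rfl⟩ : ∃ k ∈ A, (k : E) + y = x := by
    rw [← himg] at hx; obtain ⟨k, hk, h⟩ := hx; exact ⟨k, hk, h⟩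
  have h1 : k ∈ convexHull ℝ (A.extremePoints ℝ) := hK A hAcomp hAconv hk
  have h2 : (k : E) + y ∈ (fun k : ↥K => (k : E) + y) '' convexHull ℝ (A.extremePoints ℝ) :=
    mem_image_of_mem _ h1
  have h3 : (fun k : ↥K => (k : E) + y) '' convexHull ℝ (A.extremePoints ℝ)
      = convexHull ℝ ((fun k : ↥K => (k : E) + y) '' (A.extremePoints ℝ)) := by
    have := AffineMap.image_convexHull f (A.extremePoints ℝ)
    simpa [funext hfapp] using this
  rw [h3] at h2
  refine convexHull_mono ?_ h2
  calc (fun k : ↥K => (k : E) + y) '' (A.extremePoints ℝ)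
      ⊆ ((fun k : ↥K => (k : E) + y) '' A).extremePoints ℝ := aux_ext_transfer K y A
    _ = F.extremePoints ℝ := by rw [himg]


lemma aux_endpoint [FiniteDimensional ℝ E] (s : Set E) (hcomp : IsCompact s)
    (hconv : Convex ℝ s) (y d : E) (hy : y ∈ s)
    (hout : ∀ t : ℝ, 0 < t → y - t • d ∉ s)
    (hIH : ∀ K : Submodule ℝ E, K ≠ ⊤ → ∀ A : Set ↥K, IsCompact A → Convex ℝ A →
      A ⊆ convexHull ℝ (A.extremePoints ℝ)) :
    y ∈ convexHull ℝ (s.extremePoints ℝ) := by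
  classical
  set q : ℕ → E := fun n => y - (1 / (n + 1) : ℝ) • d with hq
  have hqn : ∀ n, q n ∉ s := fun n => hout _ (by positivity)
  have hHB := fun n => geometric_hahn_banach_point_closed hconv hcomp.isClosed (hqn n)
  choose l c hlq hls using hHB
  have hlpos : ∀ n, 0 < ‖l n‖ := by
    intro n
    rcases (norm_nonneg (l n)).lt_or_eq with h | h
    · exact h
    · exfalso
      have h0 : l n = 0 := norm_eq_zero.1 h.symm
      have := lt_trans (hlq n) (hls n y hy)
      rw [h0] at this; simp at this
  set g : ℕ → E →L[ℝ] ℝ := fun n => ‖l n‖⁻¹ • l n with hgdef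
  have hgnorm : ∀ n, ‖g n‖ = 1 := by
    intro n
    show ‖‖l n‖⁻¹ • l n‖ = 1
    exact (norm_smul (‖l n‖⁻¹) (l n)).trans (by
      simp only [norm_inv, norm_norm]
      exact inv_mul_cancel₀ (hlpos n).ne')
  have hgsph : ∀ n, g n ∈ Metric.sphere (0 : E →L[ℝ] ℝ) 1 := by
    intro n; rw [mem_sphere_zero_iff_norm]; exact hgnorm n
  have hg : ∀ n, ∀ u ∈ s, g n (q n) < g n u := by
    intro n u hu
    have hpos : (0:ℝ) < ‖l n‖⁻¹ := inv_pos.2 (hlpos n)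
    have : l n (q n) < l n u := lt_trans (hlq n) (hls n u hu)
    have := mul_lt_mul_of_pos_left this hpos
    simpa [hgdef] using this
  obtain ⟨lA, hlAmem, φ, hφ, hconv'⟩ :=
    (isCompact_sphere (0 : E →L[ℝ] ℝ) 1).tendsto_subseq hgsph
  have heval : ∀ v : E, Tendsto (fun n => g (φ n) v) atTop (𝓝 (lA v)) := by
    intro v
    have hc : Continuous fun L : E →L[ℝ] ℝ => L v :=
      (ContinuousLinearMap.apply ℝ ℝ v).continuous
    exact (hc.tendsto lA).comp hconv'
  have key : ∀ u ∈ s, lA y ≤ lA u := by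
    intro u hu
    have h1 : Tendsto (fun n => g (φ n) (q (φ n))) atTop (𝓝 (lA y)) := by
      have hε : Tendsto (fun n => (1 / (φ n + 1) : ℝ)) atTop (𝓝 0) :=
        tendsto_one_div_add_atTop_nhds_zero_nat.comp hφ.tendsto_atTop
      have h2 : Tendsto (fun n => (1 / (φ n + 1) : ℝ) * g (φ n) d) atTop (𝓝 (0 * lA d)) :=
        hε.mul (heval d)
      have h3 : Tendsto (fun n => g (φ n) y - (1 / (φ n + 1) : ℝ) * g (φ n) d)
          atTop (𝓝 (lA y - 0 * lA d)) := (heval y).sub h2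
      have hfe : (fun n => g (φ n) (q (φ n)))
          = fun n => g (φ n) y - (1 / (φ n + 1) : ℝ) * g (φ n) d := by
        funext n; simp [hq, map_sub, map_smul, smul_eq_mul]
      rw [hfe]
      simpa using h3
    exact le_of_tendsto_of_tendsto' h1 (heval u) fun n => (hg (φ n) u hu).le
  have hlAnorm : ‖lA‖ = 1 := mem_sphere_zero_iff_norm.1 hlAmem
  set K : Submodule ℝ E := LinearMap.ker (lA : E →ₗ[ℝ] ℝ) with hK
  have hKne : K ≠ ⊤ := by
    intro h
    have : lA = 0 := by
      ext v
      have : v ∈ LinearMap.ker (lA : E →ₗ[ℝ] ℝ) := by rw [← hK, h]; trivial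
      simpa using this
    rw [this] at hlAnorm; simp at hlAnorm
  set F : Set E := {u ∈ s | ∀ w ∈ s, lA u ≤ lA w} with hF
  have hyF : y ∈ F := ⟨hy, fun w hw => key w hw⟩
  have hFexp : IsExposed ℝ s F := by
    intro _
    refine ⟨-lA, ?_⟩
    ext u
    simp only [hF, mem_setOf_eq, ContinuousLinearMap.neg_apply, neg_le_neg_iff]
  have hFcomp : IsCompact F := hFexp.isCompact hcomp
  have hFconv : Convex ℝ F := hFexp.convex hconv
  have hFsub : ∀ u ∈ F, u - y ∈ K := by
    intro u hu
    have h1 : lA u ≤ lA y := hu.2 y hy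
    have h2 : lA y ≤ lA u := key u hu.1
    have : lA (u - y) = 0 := by rw [map_sub]; linarith
    exact LinearMap.mem_ker.2 this
  have hdesc := aux_descend K y F hFsub hFcomp hFconv (hIH K hKne)
  have hyhull : y ∈ convexHull ℝ (F.extremePoints ℝ) := hdesc hyF
  exact convexHull_mono (hFexp.isExtreme.extremePoints_subset_extremePoints) hyhull

theorem aux_minkowski : ∀ (n : ℕ) (E : Type u) [NormedAddCommGroup E] [NormedSpace ℝ E]
    [FiniteDimensional ℝ E] (s : Set E), finrank ℝ E ≤ n → IsCompact s → Convex ℝ s →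
    s ⊆ convexHull ℝ (s.extremePoints ℝ) := by
  intro n
  induction n using Nat.strong_induction_on with
  | _ n IH =>
  intro E iE1 iE2 iE3 s hn hcomp hconv x hx
  have hIHK : ∀ K : Submodule ℝ E, K ≠ ⊤ → ∀ A : Set ↥K, IsCompact A → Convex ℝ A →
      A ⊆ convexHull ℝ (A.extremePoints ℝ) := by
    intro K hK A hA1 hA2
    have hlt : finrank ℝ ↥K < n :=
      lt_of_lt_of_le (Submodule.finrank_lt hK) hn
    exact IH _ hlt ↥K A le_rfl hA1 hA2
  by_cases hspan : affineSpan ℝ s = ⊤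
  case neg =>
    have hne : s.Nonempty := ⟨x, hx⟩
    set K : Submodule ℝ E := (affineSpan ℝ s).direction with hKdef
    have hKne : K ≠ ⊤ := by
      intro hd
      exact hspan ((AffineSubspace.direction_eq_top_iff_of_nonempty
        ((affineSpan_nonempty ℝ).2 hne)).1 hd)
    have hsub : ∀ u ∈ s, u - x ∈ K := by
      intro u hu
      have := AffineSubspace.vsub_mem_direction (subset_affineSpan ℝ s hu)
        (subset_affineSpan ℝ s hx)
      simpa [vsub_eq_sub] using this
    exact aux_descend K x s hsub hcomp hconv (hIHK K hKne) hx
  case pos =>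
    by_cases hext : x ∈ s.extremePoints ℝ
    · exact subset_convexHull ℝ _ hext
    · rw [mem_extremePoints] at hext
      push_neg at hext
      obtain ⟨x₁, hx₁, x₂, hx₂, hseg, hne12⟩ := hext hx
      obtain ⟨t, u, ht, hu, htu, hsum⟩ := hseg
      set d : E := x₂ - x₁ with hd
      have hdne : d ≠ 0 := by
        intro h0
        have h12 : x₂ = x₁ := by rwa [hd, sub_eq_zero] at h0
        have hx1x : x₁ = x := by
          rw [h12] at hsum
          have : (t + u) • x₁ = x := by rw [add_smul]; exact hsum
          rwa [htu, one_smul] at this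
        exact hne12 hx1x (h12.trans hx1x)
      -- param line
      have hline1 : x + t • d = x₂ := by
        rw [hd, ← hsum]
        calc t • x₁ + u • x₂ + t • (x₂ - x₁) = (t + u) • x₂ := by module
          _ = x₂ := by rw [htu, one_smul]
      have hline2 : x + (-u) • d = x₁ := by
        rw [hd, ← hsum]
        calc t • x₁ + u • x₂ + (-u) • (x₂ - x₁) = (t + u) • x₁ := by module
          _ = x₁ := by rw [htu, one_smul]
      set I : Set ℝ := {r : ℝ | x + r • d ∈ s} with hI
      have hIconv : Convex ℝ I := by
        have := hconv.affine_preimage (AffineMap.lineMap x (x + d) : ℝ →ᵃ[ℝ] E)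
        have heq : (AffineMap.lineMap x (x + d) : ℝ →ᵃ[ℝ] E) ⁻¹' s = I := by
          ext r
          simp [AffineMap.lineMap_apply, hI]
          rw [add_comm]
        rwa [heq] at this
      have hIclosed : IsClosed I := by
        have hc : Continuous fun r : ℝ => x + r • d :=
          continuous_const.add (continuous_id.smul continuous_const)
        exact hcomp.isClosed.preimage hc
      have hIbdd : Bornology.IsBounded I := by
        obtain ⟨R, hR⟩ := hcomp.isBounded.exists_norm_le
        apply isBounded_iff_forall_norm_le.2 ⟨(R + ‖x‖) / ‖d‖, ?_⟩
        intro r hr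
        have h1 : ‖x + r • d‖ ≤ R := hR _ hr
        have h2 : ‖r • d‖ ≤ R + ‖x‖ := by
          calc ‖r • d‖ = ‖(x + r • d) - x‖ := by rw [add_sub_cancel_left]
            _ ≤ ‖x + r • d‖ + ‖x‖ := norm_sub_le _ _
            _ ≤ R + ‖x‖ := by linarith
        rw [norm_smul] at h2
        rw [Real.norm_eq_abs] at h2 ⊢
        rw [le_div_iff₀ (norm_pos_iff.2 hdne)]
        exact h2
      have hIcomp : IsCompact I := Metric.isCompact_of_isClosed_isBounded hIclosed hIbdd
      have htI : t ∈ I := by rw [hI, mem_setOf_eq, hline1]; exact hx₂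
      have huI : (-u) ∈ I := by rw [hI, mem_setOf_eq, hline2]; exact hx₁
      have hInem : I.Nonempty := ⟨t, htI⟩
      set a : ℝ := sInf I with ha
      set b : ℝ := sSup I with hb
      have haI : a ∈ I := hIcomp.sInf_mem hInem
      have hbI : b ∈ I := hIcomp.sSup_mem hInem
      have hale : a ≤ -u := csInf_le hIcomp.bddBelow huI
      have hble : t ≤ b := le_csSup hIcomp.bddAbove htI
      have haneg : a < 0 := lt_of_le_of_lt hale (by linarith)
      have hbpos : 0 < b := lt_of_lt_of_le ht hble
      have hab : a < b := lt_trans haneg hbpos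
      set y : E := x + a • d with hy
      set z : E := x + b • d with hz
      have hys : y ∈ s := haI
      have hzs : z ∈ s := hbI
      -- endpoints lie in the hull of extreme points
      have houty : ∀ r : ℝ, 0 < r → y - r • d ∉ s := by
        intro r hr hmem
        have : a - r ∈ I := by
          rw [hI, mem_setOf_eq]
          have : x + (a - r) • d = y - r • d := by
            rw [hy]; module
          rwa [this]
        have := csInf_le hIcomp.bddBelow this
        rw [← ha] at this
        linarith
      have houtz : ∀ r : ℝ, 0 < r → z - r • (-d) ∉ s := by
        intro r hr hmem
        have : b + r ∈ I := by
          rw [hI, mem_setOf_eq]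
          have : x + (b + r) • d = z - r • (-d) := by
            rw [hz]; module
          rwa [this]
        have := le_csSup hIcomp.bddAbove this
        rw [← hb] at this
        linarith
      have hyhull : y ∈ convexHull ℝ (s.extremePoints ℝ) :=
        aux_endpoint s hcomp hconv y d hys houty hIHK
      have hzhull : z ∈ convexHull ℝ (s.extremePoints ℝ) :=
        aux_endpoint s hcomp hconv z (-d) hzs houtz hIHK
      -- x is on the segment between y and z
      have hbane : b - a ≠ 0 := sub_ne_zero.2 hab.ne'
      have hc1 : b / (b - a) + -a / (b - a) = 1 := by
        rw [← add_div, ← sub_eq_add_neg]; exact div_self hbane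
      have hxseg : x ∈ segment ℝ y z := by
        refine ⟨b / (b - a), -a / (b - a), ?_, ?_, hc1, ?_⟩
        · exact div_nonneg hbpos.le (by linarith)
        · apply div_nonneg (by linarith) (by linarith)
        · have hc0 : (b / (b - a)) * a + (-a / (b - a)) * b = 0 := by
            field_simp
            ring
          have hexp : (b / (b - a)) • y + (-a / (b - a)) • z
              = (b / (b - a) + -a / (b - a)) • x
                + ((b / (b - a)) * a + (-a / (b - a)) * b) • d := by
            rw [hy, hz]; module
          rw [hexp, hc0, hc1, one_smul, zero_smul, add_zero]
      exact (convex_convexHull ℝ _).segment_subset hyhull hzhull hxseg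

end Mink

end AuxMinkowski

/-- Shannon entropy (base 2) of a finite probability vector. -/
noncomputable def shannon {n : ℕ} (p : Fin n → ℝ) : ℝ :=
  ∑ i, -(p i * Real.logb 2 (p i))

/-- Mixing (preparation) entropy of a point `ω` of a convex set `Ω`:
the infimum of the Shannon entropies of the coefficients over all finite
convex decompositions of `ω` into extreme points of `Ω`. -/
noncomputable def mixEnt {V : Type*} [AddCommGroup V] [Module ℝ V]
    (Ω : Set V) (ω : V) : ℝ :=
  sInf {h : ℝ | ∃ (n : ℕ) (p : Fin n → ℝ) (v : Fin n → V),
    (∀ i, 0 ≤ p i) ∧ (∑ i, p i = 1) ∧ (∀ i, v i ∈ Ω.extremePoints ℝ) ∧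
    ω = ∑ i, p i • v i ∧ h = shannon p}


lemma aux_shannon_merge {n m : ℕ} (c : Fin n → Fin m) (p : Fin n → ℝ) (hp : ∀ i, 0 ≤ p i) :
    shannon (fun j => ∑ i ∈ Finset.univ.filter (fun i => c i = j), p i) ≤ shannon p := by
  classical
  unfold shannon
  rw [← Finset.sum_fiberwise Finset.univ c (fun i => -(p i * Real.logb 2 (p i)))]
  apply Finset.sum_le_sum
  intro j _
  set q : ℝ := ∑ i ∈ Finset.univ.filter (fun i => c i = j), p i with hqd
  have hq0 : 0 ≤ q := Finset.sum_nonneg fun i _ => hp i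
  have hple : ∀ i ∈ Finset.univ.filter (fun i => c i = j), p i ≤ q :=
    fun i hi => Finset.single_le_sum (fun k _ => hp k) hi
  have hsplit : -(q * Real.logb 2 q)
      = ∑ i ∈ Finset.univ.filter (fun i => c i = j), -(p i * Real.logb 2 q) := by
    rw [hqd, Finset.sum_mul]
    exact (Finset.sum_neg_distrib _).symm
  rw [hsplit]
  apply Finset.sum_le_sum
  intro i hi
  rw [neg_le_neg_iff]
  rcases (hp i).eq_or_lt with h0 | h0
  · rw [← h0]; simp
  · exact mul_le_mul_of_nonneg_left
      (Real.logb_le_logb_of_le one_lt_two h0 (hple i hi)) (hp i)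




/-- steering bounds measurement entropy by mixing entropy: if ω
steers its marginal ω^B, then H(ω^A) ≤ S(ω^B). -/
theorem measEnt_le_mixEnt_of_steering {X Y : Type*} [DecidableEq X] [Fintype Y]
    (𝔄 : Set (Finset X)) (𝔅 : Set (Finset Y))
    (h𝔄 : 𝔄.Nonempty) (h𝔅 : 𝔅.Nonempty)
    (ΩB : Set (Y → ℝ)) (hconvB : Convex ℝ ΩB) (hcompB : IsCompact ΩB)
    (ℭ : Set (Finset (X × Y))) (hprod : ∀ E ∈ 𝔄, ∀ F ∈ 𝔅, E ×ˢ F ∈ ℭ)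
    (ω : X × Y → ℝ) (hω : IsState ℭ ω) (hns : NonSignaling 𝔄 𝔅 ω)
    (ωA : X → ℝ) (hωA : ∀ F ∈ 𝔅, ∀ e, ωA e = ∑ f ∈ F, ω (e, f))
    (ωB : Y → ℝ) (hωB : ∀ E ∈ 𝔄, ∀ f, ωB f = ∑ e ∈ E, ω (e, f))
    (hωBmem : ωB ∈ ΩB)
    (hsteer : ∀ (n : ℕ) (p : Fin n → ℝ) (β : Fin n → (Y → ℝ)),
      (∀ i, 0 ≤ p i) → (∑ i, p i = 1) →
      (∀ i, β i ∈ ΩB.extremePoints ℝ) → Function.Injective β →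
      ((ωB : Y → ℝ) = fun f => ∑ i, p i * β i f) →
      ∃ a : Fin n → X, Function.Injective a ∧
        (Finset.univ.image a ∈ 𝔄) ∧
        (∀ i, ωA (a i) = p i) ∧
        (∀ i, 0 < p i → ∀ f, ω (a i, f) = p i * β i f)) :
    measEnt 𝔄 ωA ≤ mixEnt ΩB ωB := by
  classical
  obtain ⟨F₀, hF₀⟩ := h𝔅
  have hωA0 : ∀ E ∈ 𝔄, ∀ e ∈ E, 0 ≤ ωA e := by
    intro E hE e he
    rw [hωA F₀ hF₀ e]
    apply Finset.sum_nonneg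
    intro f hf
    exact hω.1 (E ×ˢ F₀) (hprod E hE F₀ hF₀) (e, f) (Finset.mem_product.2 ⟨he, hf⟩)
  have hωAsum : ∀ E ∈ 𝔄, ∑ e ∈ E, ωA e = 1 := by
    intro E hE
    have h1 := hω.2 (E ×ˢ F₀) (hprod E hE F₀ hF₀)
    rw [Finset.sum_product] at h1
    calc ∑ e ∈ E, ωA e = ∑ e ∈ E, ∑ f ∈ F₀, ω (e, f) :=
          Finset.sum_congr rfl fun e _ => hωA F₀ hF₀ e
      _ = 1 := h1
  have hloc0 : ∀ E ∈ 𝔄, 0 ≤ locEnt E ωA := by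
    intro E hE
    apply Finset.sum_nonneg
    intro e he
    have h0 := hωA0 E hE e he
    have h1 : ωA e ≤ 1 := by
      rw [← hωAsum E hE]
      exact Finset.single_le_sum (fun i hi => hωA0 E hE i hi) he
    have hlog : Real.logb 2 (ωA e) ≤ 0 := Real.logb_nonpos one_lt_two h0 h1
    have hmn : ωA e * Real.logb 2 (ωA e) ≤ 0 := mul_nonpos_iff.2 (Or.inl ⟨h0, hlog⟩)
    linarith
  have hbdd : BddBelow ((fun E => locEnt E ωA) '' 𝔄) := by
    refine ⟨0, ?_⟩
    rintro r ⟨E, hE, rfl⟩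
    exact hloc0 E hE
  have hmink := aux_minkowski (Module.finrank ℝ (Y → ℝ)) (Y → ℝ) ΩB le_rfl hcompB hconvB
    hωBmem
  rw [mem_convexHull_iff_exists_fintype] at hmink
  obtain ⟨ι, hι, w, z, hw0, hw1, hzmem, hzsum⟩ := hmink
  unfold mixEnt
  apply le_csInf
  · refine ⟨shannon (w ∘ (Fintype.equivFin ι).symm), Fintype.card ι,
      w ∘ (Fintype.equivFin ι).symm, z ∘ (Fintype.equivFin ι).symm,
      fun i => hw0 _, ?_, fun i => hzmem _, ?_, rfl⟩
    · exact (Equiv.sum_comp (Fintype.equivFin ι).symm w).trans hw1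
    · rw [← hzsum]
      exact (Equiv.sum_comp (Fintype.equivFin ι).symm (fun i => w i • z i)).symm
  · rintro h ⟨n, p, v, hp0, hp1, hvext, hvsum, rfl⟩
    set T : Finset (Y → ℝ) := Finset.univ.image v with hT
    set ee := T.equivFin with hee
    set β : Fin T.card → (Y → ℝ) := fun j => ↑(ee.symm j) with hβ
    have hvT : ∀ i, v i ∈ T := fun i => Finset.mem_image_of_mem v (Finset.mem_univ i)
    set cc : Fin n → Fin T.card := fun i => ee ⟨v i, hvT i⟩ with hcc
    have hβc : ∀ i, β (cc i) = v i := by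
      intro i; rw [hβ, hcc]; simp
    set q : Fin T.card → ℝ :=
      fun j => ∑ i ∈ Finset.univ.filter (fun i => cc i = j), p i with hqdef
    have hq0 : ∀ j, 0 ≤ q j := fun j => Finset.sum_nonneg fun i _ => hp0 i
    have hq1 : ∑ j, q j = 1 := by
      show ∑ j, ∑ i ∈ Finset.univ.filter (fun i => cc i = j), p i = 1
      exact (Finset.sum_fiberwise _ _ _).trans hp1
    have hβinj : Function.Injective β := Subtype.val_injective.comp ee.symm.injective
    have hβext : ∀ j, β j ∈ ΩB.extremePoints ℝ := by
      intro j
      have hmem : (β j) ∈ T := (ee.symm j).2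
      obtain ⟨i, _, hi⟩ := Finset.mem_image.1 hmem
      rw [← hi]; exact hvext i
    have hωBq : (ωB : Y → ℝ) = fun f => ∑ j, q j * β j f := by
      funext f
      have h1 : ωB f = ∑ i, p i * v i f := by
        rw [hvsum, Finset.sum_apply]
        simp [smul_eq_mul]
      rw [h1, ← Finset.sum_fiberwise Finset.univ cc (fun i => p i * v i f)]
      apply Finset.sum_congr rfl
      intro j _
      rw [hqdef, Finset.sum_mul]
      apply Finset.sum_congr rfl
      intro i hi
      have hij : cc i = j := by simpa using (Finset.mem_filter.1 hi).2
      rw [← hij, hβc]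
    obtain ⟨aa, hainj, hEmem, haωA, -⟩ := hsteer T.card q β hq0 hq1 hβext hβinj hωBq
    have hle1 : measEnt 𝔄 ωA ≤ locEnt (Finset.univ.image aa) ωA :=
      csInf_le hbdd ⟨_, hEmem, rfl⟩
    have hle2 : locEnt (Finset.univ.image aa) ωA = shannon q := by
      unfold locEnt shannon
      rw [Finset.sum_image (fun i _ j _ hij => hainj hij)]
      apply Finset.sum_congr rfl
      intro j _
      rw [haωA j]
    have hle3 : shannon q ≤ shannon p := aux_shannon_merge cc p hp0
    calc measEnt 𝔄 ωA ≤ locEnt (Finset.univ.image aa) ωA := hle1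
      _ = shannon q := hle2
      _ ≤ shannon p := hle3
end
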